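/- There is a reduction from the halting problem for 2-register Minsky machines to the reachability problem for the class MM of λEH programs; consequently, reachability for MM (and hence for ⊢_ST-typable finitary PCF with effect handlers, since every program in MM is ⊢_ST-typable with Σ(succ) = (unit→unit) → unit) is undecidable: a 2-register Minsky machine halts from configuration (q₀,0,0) if and only if the corresponding MM program evaluates to return true. -/

import Mathlib

namespace LEH

/-! ## Syntax of λEH (finitary PCF with effect handlers), extended with records,
    in de Bruijn representation.  A handler is represented by its return clause
    (one binder) and, for each operation name `o : ℕ`, an operation clause
    (two binders: the parameter `x` at index 1 and the continuation `k` at index 0). -/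

mutual
inductive Val : Type
| var (n : ℕ)
| unit
| tt
| ff
| lam (c : Comp)
| fix (v : Val)              -- rec x = v
| record (f : ℕ → Val)
inductive Comp : Type
| ret (v : Val)
| op (o : ℕ) (v : Val)
| app (v₁ v₂ : Val)
| ite (v : Val) (c₁ c₂ : Comp)
| letin (c₁ c₂ : Comp)
| handle (hret : Comp) (hops : ℕ → Comp) (c : Comp)
| proj (v : Val) (l : ℕ)
end

def liftR (ξ : ℕ → ℕ) : ℕ → ℕ
| 0 => 0
| n+1 => ξ n + 1

mutual
def renameV (ξ : ℕ → ℕ) : Val → Val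
| .var n => .var (ξ n)
| .unit => .unit
| .tt => .tt
| .ff => .ff
| .lam c => .lam (renameC (liftR ξ) c)
| .fix v => .fix (renameV (liftR ξ) v)
| .record f => .record (fun o => renameV ξ (f o))
def renameC (ξ : ℕ → ℕ) : Comp → Comp
| .ret v => .ret (renameV ξ v)
| .op o v => .op o (renameV ξ v)
| .app v₁ v₂ => .app (renameV ξ v₁) (renameV ξ v₂)
| .ite v c₁ c₂ => .ite (renameV ξ v) (renameC ξ c₁) (renameC ξ c₂)
| .letin c₁ c₂ => .letin (renameC ξ c₁) (renameC (liftR ξ) c₂)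
| .handle r ops c =>
    .handle (renameC (liftR ξ) r) (fun o => renameC (liftR (liftR ξ)) (ops o)) (renameC ξ c)
| .proj v l => .proj (renameV ξ v) l
end

def liftS (σ : ℕ → Val) : ℕ → Val
| 0 => .var 0
| n+1 => renameV Nat.succ (σ n)

mutual
def substV (σ : ℕ → Val) : Val → Val
| .var n => σ n
| .unit => .unit
| .tt => .tt
| .ff => .ff
| .lam c => .lam (substC (liftS σ) c)
| .fix v => .fix (substV (liftS σ) v)
| .record f => .record (fun o => substV σ (f o))
def substC (σ : ℕ → Val) : Comp → Comp
| .ret v => .ret (substV σ v)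
| .op o v => .op o (substV σ v)
| .app v₁ v₂ => .app (substV σ v₁) (substV σ v₂)
| .ite v c₁ c₂ => .ite (substV σ v) (substC σ c₁) (substC σ c₂)
| .letin c₁ c₂ => .letin (substC σ c₁) (substC (liftS σ) c₂)
| .handle r ops c =>
    .handle (substC (liftS σ) r) (fun o => substC (liftS (liftS σ)) (ops o)) (substC σ c)
| .proj v l => .proj (substV σ v) l
end

/-- substitution of a single value for de Bruijn index 0 -/
def sub1 (v : Val) : ℕ → Val
| 0 => v
| n+1 => .var n

/-- substitution of two values: index 1 ↦ `x` (operation parameter),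
    index 0 ↦ `k` (captured continuation) -/
def sub2 (x k : Val) : ℕ → Val
| 0 => k
| 1 => x
| n+2 => .var n

def subst1C (c : Comp) (v : Val) : Comp := substC (sub1 v) c
def subst1V (w : Val) (v : Val) : Val := substV (sub1 v) w

/-! ## Evaluation contexts and small-step operational semantics -/

inductive EC : Type
| hole
| letE (E : EC) (c : Comp)

def plug : EC → Comp → Comp
| .hole, c => c
| .letE E c₂, c => .letin (plug E c) c₂

def renameE (ξ : ℕ → ℕ) : EC → EC
| .hole => .hole
| .letE E c => .letE (renameE ξ E) (renameC (liftR ξ) c)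

/-- the captured delimited continuation `λ y. with h handle E[return y]` -/
def contOf (r : Comp) (ops : ℕ → Comp) (E : EC) : Val :=
  .lam (.handle (renameC (liftR Nat.succ) r)
    (fun o => renameC (liftR (liftR Nat.succ)) (ops o))
    (plug (renameE Nat.succ E) (.ret (.var 0))))

inductive Step : Comp → Comp → Prop
| letc {c₁ c₂ c} : Step c₁ c₂ → Step (.letin c₁ c) (.letin c₂ c)
| letret {v c} : Step (.letin (.ret v) c) (subst1C c v)
| lamapp {c v} : Step (.app (.lam c) v) (subst1C c v)
| fixapp {v v'} : Step (.app (.fix v) v') (.app (subst1V v (.fix v)) v')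
| iftrue {c₁ c₂} : Step (.ite .tt c₁ c₂) c₁
| iffalse {c₁ c₂} : Step (.ite .ff c₁ c₂) c₂
| han {r ops c c'} : Step c c' → Step (.handle r ops c) (.handle r ops c')
| hret {r ops v} : Step (.handle r ops (.ret v)) (subst1C r v)
| hop {r ops E o v} :
    Step (.handle r ops (plug E (.op o v)))
      (substC (sub2 v (contOf r ops E)) (ops o))
| projr {f l} : Step (.proj (.record f) l) (.ret (f l))

abbrev StepStar : Comp → Comp → Prop := Relation.ReflTransGen Step
abbrev StepPlus : Comp → Comp → Prop := Relation.TransGen Step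

/-! ## ATM types and subtyping -/

mutual
inductive VTy : Type
| unit
| bool
| arrow (τ : VTy) (ρ : CTy)
inductive CTy : Type
| pure (τ : VTy)
| eff (τ : VTy) (ρ₁ ρ₂ : CTy)
end

mutual
inductive SubV : VTy → VTy → Prop
| unit : SubV .unit .unit
| bool : SubV .bool .bool
| arrow {τ₁ τ₂ ρ₁ ρ₂} : SubV τ₂ τ₁ → SubC ρ₁ ρ₂ → SubV (.arrow τ₁ ρ₁) (.arrow τ₂ ρ₂)
inductive SubC : CTy → CTy → Prop
| pure {τ₁ τ₂} : SubV τ₁ τ₂ → SubC (.pure τ₁) (.pure τ₂)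
| ipure {τ₁ τ₂ ρ₁ ρ₂ ρ₁' ρ₂'} :
    SubV τ₁ τ₂ → SubC ρ₂ ρ₁ → SubC ρ₁' ρ₂' → SubC (.eff τ₁ ρ₁ ρ₁') (.eff τ₂ ρ₂ ρ₂')
| embed {τ₁ τ₂ ρ₁ ρ₂} : SubV τ₁ τ₂ → SubC ρ₁ ρ₂ → SubC (.pure τ₁) (.eff τ₂ ρ₁ ρ₂)
end

/-- An operation signature Σ: each operation `o` has type
    `arg o → res o / ans1 o ⇒ ans2 o`. -/
structure Sig where
  arg : ℕ → VTy
  res : ℕ → VTy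
  ans1 : ℕ → CTy
  ans2 : ℕ → CTy

/-! ## The ATM type system ⊢_ATM -/

mutual
inductive TV : Sig → List VTy → Val → VTy → Prop
| unit {S Γ} : TV S Γ .unit .unit
| tt {S Γ} : TV S Γ .tt .bool
| ff {S Γ} : TV S Γ .ff .bool
| var {S Γ n τ} : Γ[n]? = some τ → TV S Γ (.var n) τ
| lam {S Γ τ c ρ} : TC S (τ :: Γ) c ρ → TV S Γ (.lam c) (.arrow τ ρ)
| fix {S Γ τ v} : TV S (τ :: Γ) v τ → TV S Γ (.fix v) τ
| vsub {S Γ v τ τ'} : TV S Γ v τ → SubV τ τ' → TV S Γ v τ'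
inductive TC : Sig → List VTy → Comp → CTy → Prop
| ret {S Γ v τ} : TV S Γ v τ → TC S Γ (.ret v) (.pure τ)
| app {S Γ v₁ v₂ τ ρ} : TV S Γ v₁ (.arrow τ ρ) → TV S Γ v₂ τ → TC S Γ (.app v₁ v₂) ρ
| ite {S Γ v c₁ c₂ ρ} :
    TV S Γ v .bool → TC S Γ c₁ ρ → TC S Γ c₂ ρ → TC S Γ (.ite v c₁ c₂) ρ
| letP {S Γ c₁ c₂ τ₁ τ₂} :
    TC S Γ c₁ (.pure τ₁) → TC S (τ₁ :: Γ) c₂ (.pure τ₂) →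
    TC S Γ (.letin c₁ c₂) (.pure τ₂)
| letIp {S Γ c₁ c₂ τ₁ τ₂ ρ₁ ρ₁' ρ₂} :
    TC S Γ c₁ (.eff τ₁ ρ₁ ρ₁') → TC S (τ₁ :: Γ) c₂ (.eff τ₂ ρ₂ ρ₁) →
    TC S Γ (.letin c₁ c₂) (.eff τ₂ ρ₂ ρ₁')
| op {S Γ o v} : TV S Γ v (S.arg o) → TC S Γ (.op o v) (.eff (S.res o) (S.ans1 o) (S.ans2 o))
| handle {S Γ r ops c τ ρ ρ'} :
    (∀ o, TC S (.arrow (S.res o) (S.ans1 o) :: S.arg o :: Γ) (ops o) (S.ans2 o)) →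
    TC S (τ :: Γ) r ρ →
    TC S Γ c (.eff τ ρ ρ') →
    TC S Γ (.handle r ops c) ρ'
| csub {S Γ c ρ ρ'} : TC S Γ c ρ → SubC ρ ρ' → TC S Γ c ρ'
end

/-! ## Simple types and the simple type system ⊢_ST (on λEH with records).
    `STy.sig` is the record type `⟦Σ⟧`; the system is parametrized by an
    interpretation `I : ℕ → STy` of its fields and by an operation
    signature `SS`. -/

inductive STy : Type
| unit
| bool
| arrow (σ₁ σ₂ : STy)
| sig

structure SigS where
  arg : ℕ → STy
  res : ℕ → STy

mutual
inductive SV : (ℕ → STy) → SigS → List STy → Val → STy → Prop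
| unit {I SS Γ} : SV I SS Γ .unit .unit
| tt {I SS Γ} : SV I SS Γ .tt .bool
| ff {I SS Γ} : SV I SS Γ .ff .bool
| var {I SS Γ n σ} : Γ[n]? = some σ → SV I SS Γ (.var n) σ
| lam {I SS Γ σ c σ'} : SC I SS (σ :: Γ) c σ' → SV I SS Γ (.lam c) (.arrow σ σ')
| fix {I SS Γ σ v} : SV I SS (σ :: Γ) v σ → SV I SS Γ (.fix v) σ
| record {I SS Γ f} : (∀ o, SV I SS Γ (f o) (I o)) → SV I SS Γ (.record f) .sig
inductive SC : (ℕ → STy) → SigS → List STy → Comp → STy → Prop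
| ret {I SS Γ v σ} : SV I SS Γ v σ → SC I SS Γ (.ret v) σ
| app {I SS Γ v₁ v₂ σ σ'} :
    SV I SS Γ v₁ (.arrow σ σ') → SV I SS Γ v₂ σ → SC I SS Γ (.app v₁ v₂) σ'
| ite {I SS Γ v c₁ c₂ σ} :
    SV I SS Γ v .bool → SC I SS Γ c₁ σ → SC I SS Γ c₂ σ → SC I SS Γ (.ite v c₁ c₂) σ
| letin {I SS Γ c₁ c₂ σ σ'} :
    SC I SS Γ c₁ σ → SC I SS (σ :: Γ) c₂ σ' → SC I SS Γ (.letin c₁ c₂) σ'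
| op {I SS Γ o v} : SV I SS Γ v (SS.arg o) → SC I SS Γ (.op o v) (SS.res o)
| handle {I SS Γ r ops c σ σ'} :
    SC I SS (σ :: Γ) r σ' →
    (∀ o, SC I SS (.arrow (SS.res o) σ' :: SS.arg o :: Γ) (ops o) σ') →
    SC I SS Γ c σ →
    SC I SS Γ (.handle r ops c) σ'
| proj {I SS Γ v l} : SV I SS Γ v .sig → SC I SS Γ (.proj v l) (I l)
end

/-! ## Derivation trees (Type-valued) for subtyping and ATM typing,
    used by the typing-derivation-directed CPS transformation -/

mutual
inductive SubVD : VTy → VTy → Type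
| unit : SubVD .unit .unit
| bool : SubVD .bool .bool
| arrow {τ₁ τ₂ ρ₁ ρ₂} : SubVD τ₂ τ₁ → SubCD ρ₁ ρ₂ → SubVD (.arrow τ₁ ρ₁) (.arrow τ₂ ρ₂)
inductive SubCD : CTy → CTy → Type
| pure {τ₁ τ₂} : SubVD τ₁ τ₂ → SubCD (.pure τ₁) (.pure τ₂)
| ipure {τ₁ τ₂ ρ₁ ρ₂ ρ₁' ρ₂'} :
    SubVD τ₁ τ₂ → SubCD ρ₂ ρ₁ → SubCD ρ₁' ρ₂' → SubCD (.eff τ₁ ρ₁ ρ₁') (.eff τ₂ ρ₂ ρ₂')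
| embed {τ₁ τ₂ ρ₁ ρ₂} : SubVD τ₁ τ₂ → SubCD ρ₁ ρ₂ → SubCD (.pure τ₁) (.eff τ₂ ρ₁ ρ₂)
end

mutual
inductive TVD : Sig → List VTy → Val → VTy → Type
| unit {S Γ} : TVD S Γ .unit .unit
| tt {S Γ} : TVD S Γ .tt .bool
| ff {S Γ} : TVD S Γ .ff .bool
| var {S Γ τ} (n : ℕ) : Γ[n]? = some τ → TVD S Γ (.var n) τ
| lam {S Γ τ c ρ} : TCD S (τ :: Γ) c ρ → TVD S Γ (.lam c) (.arrow τ ρ)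
| fix {S Γ τ v} : TVD S (τ :: Γ) v τ → TVD S Γ (.fix v) τ
| vsub {S Γ v τ τ'} : TVD S Γ v τ → SubVD τ τ' → TVD S Γ v τ'
inductive TCD : Sig → List VTy → Comp → CTy → Type
| ret {S Γ v τ} : TVD S Γ v τ → TCD S Γ (.ret v) (.pure τ)
| app {S Γ v₁ v₂ τ ρ} : TVD S Γ v₁ (.arrow τ ρ) → TVD S Γ v₂ τ → TCD S Γ (.app v₁ v₂) ρ
| ite {S Γ v c₁ c₂ ρ} :
    TVD S Γ v .bool → TCD S Γ c₁ ρ → TCD S Γ c₂ ρ → TCD S Γ (.ite v c₁ c₂) ρ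
| letP {S Γ c₁ c₂ τ₁ τ₂} :
    TCD S Γ c₁ (.pure τ₁) → TCD S (τ₁ :: Γ) c₂ (.pure τ₂) →
    TCD S Γ (.letin c₁ c₂) (.pure τ₂)
| letIp {S Γ c₁ c₂ τ₁ τ₂ ρ₁ ρ₁' ρ₂} :
    TCD S Γ c₁ (.eff τ₁ ρ₁ ρ₁') → TCD S (τ₁ :: Γ) c₂ (.eff τ₂ ρ₂ ρ₁) →
    TCD S Γ (.letin c₁ c₂) (.eff τ₂ ρ₂ ρ₁')
| op {S Γ} (o : ℕ) {v} :
    TVD S Γ v (S.arg o) → TCD S Γ (.op o v) (.eff (S.res o) (S.ans1 o) (S.ans2 o))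
| handle {S Γ r ops c τ ρ ρ'} :
    (∀ o, TCD S (.arrow (S.res o) (S.ans1 o) :: S.arg o :: Γ) (ops o) (S.ans2 o)) →
    TCD S (τ :: Γ) r ρ →
    TCD S Γ c (.eff τ ρ ρ') →
    TCD S Γ (.handle r ops c) ρ'
| csub {S Γ c ρ ρ'} : TCD S Γ c ρ → SubCD ρ ρ' → TCD S Γ c ρ'
end

/-! ## The CPS transformation -/

/-! CPS transformation of ATM value and computation types into simple types;
    `⟦τ/ρ₁⇒ρ₂⟧ = ⟦Σ⟧ → (⟦τ⟧ → ⟦ρ₁⟧) → ⟦ρ₂⟧`, where `⟦Σ⟧` is `STy.sig`. -/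
mutual
def cpsT : VTy → STy
| .unit => .unit
| .bool => .bool
| .arrow τ ρ => .arrow (cpsT τ) (cpsCT ρ)
def cpsCT : CTy → STy
| .pure τ => cpsT τ
| .eff τ ρ₁ ρ₂ => .arrow .sig (.arrow (.arrow (cpsT τ) (cpsCT ρ₁)) (cpsCT ρ₂))
end

/-- the field types of the record type `⟦Σ⟧` -/
def opSTy (S : Sig) : ℕ → STy := fun o =>
  .arrow (cpsT (S.arg o)) (.arrow (.arrow (cpsT (S.res o)) (cpsCT (S.ans1 o))) (cpsCT (S.ans2 o)))

/-- application of a computation to a computation (left-to-right sequencing sugar) -/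
def apc (c₁ c₂ : Comp) : Comp :=
  .letin c₁ (.letin (renameC Nat.succ c₂) (.app (.var 1) (.var 0)))

/-! CPS transformation of subtyping derivations, given as the coercion
    they induce on (already-transformed) terms; the static applications `@`
    of the paper are performed on the fly. -/
mutual
def coerceV : {τ τ' : VTy} → SubVD τ τ' → Val → Val
| _, _, .unit, v => v
| _, _, .bool, v => v
| _, _, .arrow d21 d12, f =>
    .lam (coerceC d12 (.app (renameV Nat.succ f) (coerceV d21 (.var 0))))
def coerceC : {ρ ρ' : CTy} → SubCD ρ ρ' → Comp → Comp
| _, _, .pure d, c => .letin c (.ret (coerceV d (.var 0)))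
| _, _, .ipure dT d21 d12, c =>
    .ret (.lam (.ret (.lam (coerceC d12
      (apc (apc (renameC (fun n => n + 2) c) (.ret (.var 1)))
        (.ret (.lam (coerceC d21 (apc (.ret (.var 1)) (.ret (coerceV dT (.var 0))))))))))))
| _, _, .embed dT dR, c =>
    .ret (.lam (.ret (.lam (coerceC dR
      (.letin (renameC (fun n => n + 2) c)
        (apc (.ret (.var 1)) (.ret (coerceV dT (.var 0)))))))))
end

/-! the typing-derivation-directed CPS transformation -/
mutual
def cpsV {S : Sig} : {Γ : List VTy} → {v : Val} → {τ : VTy} → TVD S Γ v τ → Val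
| _, _, _, .unit => .unit
| _, _, _, .tt => .tt
| _, _, _, .ff => .ff
| _, _, _, .var n _ => .var n
| _, _, _, .lam D => .lam (cpsC D)
| _, _, _, .fix D => .fix (cpsV D)
| _, _, _, .vsub D d => coerceV d (cpsV D)
def cpsC {S : Sig} : {Γ : List VTy} → {c : Comp} → {ρ : CTy} → TCD S Γ c ρ → Comp
| _, _, _, .ret D => .ret (cpsV D)
| _, _, _, .app D₁ D₂ => .app (cpsV D₁) (cpsV D₂)
| _, _, _, .ite Dv D₁ D₂ => .ite (cpsV Dv) (cpsC D₁) (cpsC D₂)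
| _, _, _, .letP D₁ D₂ => .letin (cpsC D₁) (cpsC D₂)
| _, _, _, .letIp D₁ D₂ =>
    .ret (.lam (.ret (.lam (apc (apc (renameC (fun n => n + 2) (cpsC D₁)) (.ret (.var 1)))
      (.ret (.lam (apc (apc (renameC (liftR (fun n => n + 2)) (cpsC D₂)) (.ret (.var 2)))
        (.ret (.var 1)))))))))
| _, _, _, .op o Dv =>
    .ret (.lam (.ret (.lam (apc (apc (.proj (.var 1) o)
      (.ret (renameV (fun n => n + 2) (cpsV Dv)))) (.ret (.var 0))))))
| _, _, _, .handle Dops Dret Dc =>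
    apc (apc (cpsC Dc) (.ret (.record (fun o => .lam (.ret (.lam (cpsC (Dops o))))))))
      (.ret (.lam (cpsC Dret)))
| _, _, _, .csub D d => coerceC d (cpsC D)
end

/-- `⟦D⟧ v_h v_k`: applying a CPS-transformed effectful computation to a
    (translated) handler record and continuation -/
def capp2 (c : Comp) (vh vk : Val) : Comp := apc (apc c (.ret vh)) (.ret vk)

/-! ## Effect-handler-freeness and rec-freeness -/

mutual
def hfV : Val → Prop
| .var _ => True
| .unit => True
| .tt => True
| .ff => True
| .lam c => hfC c
| .fix v => hfV v
| .record f => ∀ o, hfV (f o)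
def hfC : Comp → Prop
| .ret v => hfV v
| .op _ _ => False
| .app v₁ v₂ => hfV v₁ ∧ hfV v₂
| .ite v c₁ c₂ => hfV v ∧ hfC c₁ ∧ hfC c₂
| .letin c₁ c₂ => hfC c₁ ∧ hfC c₂
| .handle _ _ _ => False
| .proj v _ => hfV v
end

mutual
def recFreeV : Val → Prop
| .var _ => True
| .unit => True
| .tt => True
| .ff => True
| .lam c => recFreeC c
| .fix _ => False
| .record f => ∀ o, recFreeV (f o)
def recFreeC : Comp → Prop
| .ret v => recFreeV v
| .op _ v => recFreeV v
| .app v₁ v₂ => recFreeV v₁ ∧ recFreeV v₂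
| .ite v c₁ c₂ => recFreeV v ∧ recFreeC c₁ ∧ recFreeC c₂
| .letin c₁ c₂ => recFreeC c₁ ∧ recFreeC c₂
| .handle r ops c => recFreeC r ∧ (∀ o, recFreeC (ops o)) ∧ recFreeC c
| .proj v _ => recFreeV v
end

end LEH

namespace LEH

/-! ## 2-register Minsky machines -/

inductive MInstr (N : ℕ) : Type
| inc (i : Fin 2) (j : Fin N)
| dec (i : Fin 2) (j m : Fin N)
| halt

abbrev MCfg (N : ℕ) := Fin N × ℕ × ℕ

inductive MStep {N : ℕ} (M : Fin N → MInstr N) : MCfg N → MCfg N → Prop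
| inc0 {q j a b} : M q = .inc 0 j → MStep M (q, a, b) (j, a+1, b)
| inc1 {q j a b} : M q = .inc 1 j → MStep M (q, a, b) (j, a, b+1)
| dec0z {q j m b} : M q = .dec 0 j m → MStep M (q, 0, b) (j, 0, b)
| dec0s {q j m a b} : M q = .dec 0 j m → MStep M (q, a+1, b) (m, a, b)
| dec1z {q j m a} : M q = .dec 1 j m → MStep M (q, a, 0) (j, a, 0)
| dec1s {q j m a b} : M q = .dec 1 j m → MStep M (q, a, b+1) (m, a, b)

/-- the machine halts when started in state `q₀ = 0` with both registers `0` -/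
def MHalts {N : ℕ} (M : Fin (N+1) → MInstr (N+1)) : Prop :=
  ∃ q a b, Relation.ReflTransGen (MStep M) (0, 0, 0) (q, a, b) ∧ M q = MInstr.halt

/-! ## The class MM of λEH programs encoding Minsky machines.
    Registers are encoded as functions `unit → unit` built by nesting the
    operation `succ` (operation name `0`); machine states are mutually
    recursive functions `f₀,…,fₙ`. -/

/-- de Bruijn environment recording the indices of `f₀,…,fₙ` and of the two
    register variables `x₀, x₁` -/
structure REnv (N : ℕ) where
  f : Fin N → ℕ
  x0 : ℕ
  x1 : ℕ

/-- `f_j x₀ x₁` -/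
def callF (fj a b : ℕ) : Comp :=
  .letin (.app (.var fj) (.var a)) (.app (.var 0) (.var (b+1)))

/-- translation of a single Minsky instruction:
    `inc` is `let x_i = λy. succ x_i in f_j x₀ x₁`;
    `dec` is `with {return x = f_j x₀ x₁, succ x_i k = f_m x₀ x₁} handle x_i ()`;
    `halt` is `()` -/
def instrC {N : ℕ} (ins : MInstr N) (e : REnv N) : Comp :=
  match ins with
  | .halt => .ret .unit
  | .inc i j =>
      if i = 0 then
        .letin (.ret (.lam (.op 0 (.var (e.x0 + 1))))) (callF (e.f j + 1) 0 (e.x1 + 1))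
      else
        .letin (.ret (.lam (.op 0 (.var (e.x1 + 1))))) (callF (e.f j + 1) (e.x0 + 1) 0)
  | .dec i j m =>
      .handle (callF (e.f j + 1) (e.x0 + 1) (e.x1 + 1))
        (fun _ =>
          if i = 0 then callF (e.f m + 2) 1 (e.x1 + 2)
          else callF (e.f m + 2) (e.x0 + 2) 1)
        (.app (.var (if i = 0 then e.x0 else e.x1)) .unit)

/-- shift the environment under one extra binder which binds `f_j` -/
def bumpF {N : ℕ} (e : REnv N) (j : Fin N) : REnv N :=
  ⟨fun j' => if j' = j then 0 else e.f j' + 1, e.x0 + 1, e.x1 + 1⟩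

/-- the `mrec` syntactic sugar: each `f_j` in `todo` is bound by a `let` to
    `rec f_j = λx₀.λx₁. (mrec (all-others) in body of f_j)`; `fuel` bounds the
    recursion depth (any `fuel ≥ (N+1)²` suffices for the full unfolding). -/
def mrecDefs {N : ℕ} (M : Fin N → MInstr N) :
    ℕ → List (Fin N) → List (Fin N) → REnv N → (REnv N → Comp) → Comp
| 0, _, _, e, k => k e
| fuel+1, full, todo, e, k =>
  match todo with
  | [] => k e
  | j :: td =>
      .letin (.ret (.fix (.lam (.ret (.lam
        (mrecDefs M fuel (full.erase j) (full.erase j)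
          ⟨fun j' => (bumpF e j).f j' + 2, 1, 0⟩
          (fun e' => instrC (M j) e')))))))
        (mrecDefs M fuel full td (bumpF e j) k)

/-- the MM program of a machine:
    `mrec f₀ = λx₀.λx₁.c₀ and … and fₙ = λx₀.λx₁.cₙ in (f₀ (λx.()) (λx.())); true` -/
def encodeMM {N : ℕ} (M : Fin (N+1) → MInstr (N+1)) : Comp :=
  mrecDefs M ((N + 2) * (N + 2)) (List.finRange (N+1)) (List.finRange (N+1))
    ⟨fun _ => 0, 0, 0⟩
    (fun e =>
      .letin (.letin (.app (.var (e.f 0)) (.lam (.ret .unit)))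
          (.app (.var 0) (.lam (.ret .unit))))
        (.ret .tt))

/-- the simple-type signature `Σ(succ) = (unit→unit) → unit` -/
def SSmm : SigS := ⟨fun _ => STy.arrow .unit .unit, fun _ => .unit⟩

/-! ### Substitution / renaming infrastructure -/

theorem liftR_ext {ξ ξ' : ℕ → ℕ} (h : ∀ n, ξ n = ξ' n) : ∀ n, liftR ξ n = liftR ξ' n :=
  fun n => by cases n <;> simp [liftR, h]

mutual
theorem renameV_ext : ∀ (v : Val) (ξ ξ' : ℕ → ℕ), (∀ n, ξ n = ξ' n) →
    renameV ξ v = renameV ξ' v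
| .var n, _, _, h => by simp [renameV, h n]
| .unit, _, _, _ => rfl
| .tt, _, _, _ => rfl
| .ff, _, _, _ => rfl
| .lam c, _, _, h => by
    simp only [renameV]; rw [renameC_ext c _ _ (liftR_ext h)]
| .fix v, _, _, h => by
    simp only [renameV]; rw [renameV_ext v _ _ (liftR_ext h)]
| .record f, _, _, h => by
    simp only [renameV]
    exact congrArg Val.record (funext fun o => renameV_ext (f o) _ _ h)
theorem renameC_ext : ∀ (c : Comp) (ξ ξ' : ℕ → ℕ), (∀ n, ξ n = ξ' n) →
    renameC ξ c = renameC ξ' c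
| .ret v, _, _, h => by simp only [renameC]; rw [renameV_ext v _ _ h]
| .op o v, _, _, h => by simp only [renameC]; rw [renameV_ext v _ _ h]
| .app v₁ v₂, _, _, h => by simp only [renameC]; rw [renameV_ext v₁ _ _ h, renameV_ext v₂ _ _ h]
| .ite v c₁ c₂, _, _, h => by
    simp only [renameC]; rw [renameV_ext v _ _ h, renameC_ext c₁ _ _ h, renameC_ext c₂ _ _ h]
| .letin c₁ c₂, _, _, h => by
    simp only [renameC]
    rw [renameC_ext c₁ _ _ h, renameC_ext c₂ _ _ (liftR_ext h)]
| .handle r ops c, _, _, h => by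
    simp only [renameC]
    rw [renameC_ext r _ _ (liftR_ext h), renameC_ext c _ _ h]
    congr 1
    exact funext fun o => renameC_ext (ops o) _ _ (liftR_ext (liftR_ext h))
| .proj v l, _, _, h => by simp only [renameC]; rw [renameV_ext v _ _ h]
end

theorem liftS_ext {σ σ' : ℕ → Val} (h : ∀ n, σ n = σ' n) : ∀ n, liftS σ n = liftS σ' n :=
  fun n => by cases n <;> simp [liftS, h]

mutual
theorem substV_ext : ∀ (v : Val) (σ σ' : ℕ → Val), (∀ n, σ n = σ' n) →
    substV σ v = substV σ' v
| .var n, _, _, h => by simp [substV, h n]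
| .unit, _, _, _ => rfl
| .tt, _, _, _ => rfl
| .ff, _, _, _ => rfl
| .lam c, _, _, h => by
    simp only [substV]; rw [substC_ext c _ _ (liftS_ext h)]
| .fix v, _, _, h => by
    simp only [substV]; rw [substV_ext v _ _ (liftS_ext h)]
| .record f, _, _, h => by
    simp only [substV]
    exact congrArg Val.record (funext fun o => substV_ext (f o) _ _ h)
theorem substC_ext : ∀ (c : Comp) (σ σ' : ℕ → Val), (∀ n, σ n = σ' n) →
    substC σ c = substC σ' c
| .ret v, _, _, h => by simp only [substC]; rw [substV_ext v _ _ h]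
| .op o v, _, _, h => by simp only [substC]; rw [substV_ext v _ _ h]
| .app v₁ v₂, _, _, h => by simp only [substC]; rw [substV_ext v₁ _ _ h, substV_ext v₂ _ _ h]
| .ite v c₁ c₂, _, _, h => by
    simp only [substC]; rw [substV_ext v _ _ h, substC_ext c₁ _ _ h, substC_ext c₂ _ _ h]
| .letin c₁ c₂, _, _, h => by
    simp only [substC]
    rw [substC_ext c₁ _ _ h, substC_ext c₂ _ _ (liftS_ext h)]
| .handle r ops c, _, _, h => by
    simp only [substC]
    rw [substC_ext r _ _ (liftS_ext h), substC_ext c _ _ h]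
    congr 1
    exact funext fun o => substC_ext (ops o) _ _ (liftS_ext (liftS_ext h))
| .proj v l, _, _, h => by simp only [substC]; rw [substV_ext v _ _ h]
end

theorem liftR_comp (ξ₂ ξ₁ : ℕ → ℕ) : ∀ n, (liftR ξ₂ ∘ liftR ξ₁) n = liftR (ξ₂ ∘ ξ₁) n :=
  fun n => by cases n <;> simp [liftR, Function.comp]

theorem liftR2_comp (ξ₂ ξ₁ : ℕ → ℕ) :
    ∀ n, (liftR (liftR ξ₂) ∘ liftR (liftR ξ₁)) n = liftR (liftR (ξ₂ ∘ ξ₁)) n :=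
  fun n => (liftR_comp _ _ n).trans (liftR_ext (liftR_comp _ _) n)

mutual
theorem renameV_renameV : ∀ (v : Val) (ξ₂ ξ₁ : ℕ → ℕ),
    renameV ξ₂ (renameV ξ₁ v) = renameV (ξ₂ ∘ ξ₁) v
| .var n, _, _ => rfl
| .unit, _, _ => rfl
| .tt, _, _ => rfl
| .ff, _, _ => rfl
| .lam c, _, _ => by
    simp only [renameV]; rw [renameC_renameC c]
    exact congrArg _ (renameC_ext c _ _ (liftR_comp _ _))
| .fix v, _, _ => by
    simp only [renameV]; rw [renameV_renameV v]
    exact congrArg _ (renameV_ext v _ _ (liftR_comp _ _))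
| .record f, _, _ => by
    simp only [renameV]
    exact congrArg Val.record (funext fun o => renameV_renameV (f o) _ _)
theorem renameC_renameC : ∀ (c : Comp) (ξ₂ ξ₁ : ℕ → ℕ),
    renameC ξ₂ (renameC ξ₁ c) = renameC (ξ₂ ∘ ξ₁) c
| .ret v, _, _ => by simp only [renameC]; rw [renameV_renameV v]
| .op o v, _, _ => by simp only [renameC]; rw [renameV_renameV v]
| .app v₁ v₂, _, _ => by simp only [renameC]; rw [renameV_renameV v₁, renameV_renameV v₂]
| .ite v c₁ c₂, _, _ => by
    simp only [renameC]; rw [renameV_renameV v, renameC_renameC c₁, renameC_renameC c₂]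
| .letin c₁ c₂, _, _ => by
    simp only [renameC]
    rw [renameC_renameC c₁, renameC_renameC c₂]
    exact congrArg _ (renameC_ext c₂ _ _ (liftR_comp _ _))
| .handle r ops c, _, _ => by
    simp only [renameC]
    rw [renameC_renameC r, renameC_renameC c]
    congr 1
    · exact renameC_ext r _ _ (liftR_comp _ _)
    · refine funext fun o => ?_
      rw [renameC_renameC (ops o)]
      exact renameC_ext (ops o) _ _ (liftR2_comp _ _)
| .proj v l, _, _ => by simp only [renameC]; rw [renameV_renameV v]
end

theorem liftS_liftR (σ : ℕ → Val) (ξ : ℕ → ℕ) :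
    ∀ n, (liftS σ ∘ liftR ξ) n = liftS (fun m => σ (ξ m)) n :=
  fun n => by cases n <;> simp [liftS, liftR, Function.comp]

theorem liftS2_liftR (σ : ℕ → Val) (ξ : ℕ → ℕ) :
    ∀ n, (liftS (liftS σ) ∘ liftR (liftR ξ)) n = liftS (liftS (fun m => σ (ξ m))) n :=
  fun n => (liftS_liftR _ _ n).trans (liftS_ext (liftS_liftR _ _) n)

mutual
theorem substV_renameV : ∀ (v : Val) (σ : ℕ → Val) (ξ : ℕ → ℕ),
    substV σ (renameV ξ v) = substV (fun n => σ (ξ n)) v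
| .var n, _, _ => rfl
| .unit, _, _ => rfl
| .tt, _, _ => rfl
| .ff, _, _ => rfl
| .lam c, _, _ => by
    simp only [renameV, substV]; rw [substC_renameC c]
    exact congrArg _ (substC_ext c _ _ (liftS_liftR _ _))
| .fix v, _, _ => by
    simp only [renameV, substV]; rw [substV_renameV v]
    exact congrArg _ (substV_ext v _ _ (liftS_liftR _ _))
| .record f, _, _ => by
    simp only [renameV, substV]
    exact congrArg Val.record (funext fun o => substV_renameV (f o) _ _)
theorem substC_renameC : ∀ (c : Comp) (σ : ℕ → Val) (ξ : ℕ → ℕ),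
    substC σ (renameC ξ c) = substC (fun n => σ (ξ n)) c
| .ret v, _, _ => by simp only [renameC, substC]; rw [substV_renameV v]
| .op o v, _, _ => by simp only [renameC, substC]; rw [substV_renameV v]
| .app v₁ v₂, _, _ => by
    simp only [renameC, substC]; rw [substV_renameV v₁, substV_renameV v₂]
| .ite v c₁ c₂, _, _ => by
    simp only [renameC, substC]
    rw [substV_renameV v, substC_renameC c₁, substC_renameC c₂]
| .letin c₁ c₂, _, _ => by
    simp only [renameC, substC]
    rw [substC_renameC c₁, substC_renameC c₂]
    exact congrArg _ (substC_ext c₂ _ _ (liftS_liftR _ _))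
| .handle r ops c, _, _ => by
    simp only [renameC, substC]
    rw [substC_renameC r, substC_renameC c]
    congr 1
    · exact substC_ext r _ _ (liftS_liftR _ _)
    · refine funext fun o => ?_
      rw [substC_renameC (ops o)]
      exact substC_ext (ops o) _ _ (liftS2_liftR _ _)
| .proj v l, _, _ => by simp only [renameC, substC]; rw [substV_renameV v]
end

theorem liftR_liftS (ξ : ℕ → ℕ) (σ : ℕ → Val) :
    ∀ n, renameV (liftR ξ) (liftS σ n) = liftS (fun m => renameV ξ (σ m)) n := by
  intro n
  cases n with
  | zero => simp [liftS, renameV, liftR]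
  | succ n =>
    simp only [liftS]
    rw [renameV_renameV, renameV_renameV]
    exact renameV_ext _ _ _ (fun m => by simp [liftR, Function.comp])

theorem liftR2_liftS (ξ : ℕ → ℕ) (σ : ℕ → Val) :
    ∀ n, renameV (liftR (liftR ξ)) (liftS (liftS σ) n) =
      liftS (liftS (fun m => renameV ξ (σ m))) n :=
  fun n => (liftR_liftS _ _ n).trans (liftS_ext (liftR_liftS _ _) n)

mutual
theorem renameV_substV : ∀ (v : Val) (ξ : ℕ → ℕ) (σ : ℕ → Val),
    renameV ξ (substV σ v) = substV (fun n => renameV ξ (σ n)) v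
| .var n, _, _ => rfl
| .unit, _, _ => rfl
| .tt, _, _ => rfl
| .ff, _, _ => rfl
| .lam c, _, _ => by
    simp only [substV, renameV]; rw [renameC_substC c]
    exact congrArg _ (substC_ext c _ _ (liftR_liftS _ _))
| .fix v, _, _ => by
    simp only [substV, renameV]; rw [renameV_substV v]
    exact congrArg _ (substV_ext v _ _ (liftR_liftS _ _))
| .record f, _, _ => by
    simp only [substV, renameV]
    exact congrArg Val.record (funext fun o => renameV_substV (f o) _ _)
theorem renameC_substC : ∀ (c : Comp) (ξ : ℕ → ℕ) (σ : ℕ → Val),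
    renameC ξ (substC σ c) = substC (fun n => renameV ξ (σ n)) c
| .ret v, _, _ => by simp only [substC, renameC]; rw [renameV_substV v]
| .op o v, _, _ => by simp only [substC, renameC]; rw [renameV_substV v]
| .app v₁ v₂, _, _ => by
    simp only [substC, renameC]; rw [renameV_substV v₁, renameV_substV v₂]
| .ite v c₁ c₂, _, _ => by
    simp only [substC, renameC]
    rw [renameV_substV v, renameC_substC c₁, renameC_substC c₂]
| .letin c₁ c₂, _, _ => by
    simp only [substC, renameC]
    rw [renameC_substC c₁, renameC_substC c₂]
    exact congrArg _ (substC_ext c₂ _ _ (liftR_liftS _ _))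
| .handle r ops c, _, _ => by
    simp only [substC, renameC]
    rw [renameC_substC r, renameC_substC c]
    congr 1
    · exact substC_ext r _ _ (liftR_liftS _ _)
    · refine funext fun o => ?_
      rw [renameC_substC (ops o)]
      exact substC_ext (ops o) _ _ (liftR2_liftS _ _)
| .proj v l, _, _ => by simp only [substC, renameC]; rw [renameV_substV v]
end

/-- composition of substitutions -/
def scomp (σ₂ σ₁ : ℕ → Val) : ℕ → Val := fun n => substV σ₂ (σ₁ n)

theorem liftS_scomp (σ₂ σ₁ : ℕ → Val) :
    ∀ n, substV (liftS σ₂) (liftS σ₁ n) = liftS (scomp σ₂ σ₁) n := by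
  intro n
  cases n with
  | zero => simp [liftS, substV, scomp]
  | succ n =>
    simp only [liftS, scomp]
    rw [substV_renameV, renameV_substV]
    exact substV_ext _ _ _ (fun m => rfl)

theorem liftS2_scomp (σ₂ σ₁ : ℕ → Val) :
    ∀ n, substV (liftS (liftS σ₂)) (liftS (liftS σ₁) n) = liftS (liftS (scomp σ₂ σ₁)) n :=
  fun n => (liftS_scomp _ _ n).trans (liftS_ext (liftS_scomp _ _) n)

mutual
theorem substV_substV : ∀ (v : Val) (σ₂ σ₁ : ℕ → Val),
    substV σ₂ (substV σ₁ v) = substV (scomp σ₂ σ₁) v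
| .var n, _, _ => rfl
| .unit, _, _ => rfl
| .tt, _, _ => rfl
| .ff, _, _ => rfl
| .lam c, _, _ => by
    simp only [substV]; rw [substC_substC c]
    exact congrArg _ (substC_ext c _ _ (liftS_scomp _ _))
| .fix v, _, _ => by
    simp only [substV]; rw [substV_substV v]
    exact congrArg _ (substV_ext v _ _ (liftS_scomp _ _))
| .record f, _, _ => by
    simp only [substV]
    exact congrArg Val.record (funext fun o => substV_substV (f o) _ _)
theorem substC_substC : ∀ (c : Comp) (σ₂ σ₁ : ℕ → Val),
    substC σ₂ (substC σ₁ c) = substC (scomp σ₂ σ₁) c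
| .ret v, _, _ => by simp only [substC]; rw [substV_substV v]
| .op o v, _, _ => by simp only [substC]; rw [substV_substV v]
| .app v₁ v₂, _, _ => by simp only [substC]; rw [substV_substV v₁, substV_substV v₂]
| .ite v c₁ c₂, _, _ => by
    simp only [substC]; rw [substV_substV v, substC_substC c₁, substC_substC c₂]
| .letin c₁ c₂, _, _ => by
    simp only [substC]
    rw [substC_substC c₁, substC_substC c₂]
    exact congrArg _ (substC_ext c₂ _ _ (liftS_scomp _ _))
| .handle r ops c, _, _ => by
    simp only [substC]
    rw [substC_substC r, substC_substC c]
    congr 1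
    · exact substC_ext r _ _ (liftS_scomp _ _)
    · refine funext fun o => ?_
      rw [substC_substC (ops o)]
      exact substC_ext (ops o) _ _ (liftS2_scomp _ _)
| .proj v l, _, _ => by simp only [substC]; rw [substV_substV v]
end

theorem liftS_var : ∀ n, liftS Val.var n = Val.var n :=
  fun n => by cases n <;> simp [liftS, renameV]

mutual
theorem substV_var : ∀ (v : Val), substV Val.var v = v
| .var n => rfl
| .unit => rfl
| .tt => rfl
| .ff => rfl
| .lam c => by
    simp only [substV]; rw [substC_ext c _ _ liftS_var, substC_var c]
| .fix v => by
    simp only [substV]; rw [substV_ext v _ _ liftS_var, substV_var v]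
| .record f => by
    simp only [substV]
    exact congrArg Val.record (funext fun o => substV_var (f o))
theorem substC_var : ∀ (c : Comp), substC Val.var c = c
| .ret v => by simp only [substC]; rw [substV_var v]
| .op o v => by simp only [substC]; rw [substV_var v]
| .app v₁ v₂ => by simp only [substC]; rw [substV_var v₁, substV_var v₂]
| .ite v c₁ c₂ => by
    simp only [substC]; rw [substV_var v, substC_var c₁, substC_var c₂]
| .letin c₁ c₂ => by
    simp only [substC]
    rw [substC_ext c₂ _ _ liftS_var, substC_var c₁, substC_var c₂]
| .handle r ops c => by
    simp only [substC]
    rw [substC_ext r _ _ liftS_var, substC_var r, substC_var c]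
    congr 1
    refine funext fun o => ?_
    rw [substC_ext (ops o) _ _ (liftS_ext liftS_var), substC_ext (ops o) _ _ liftS_var]
    exact substC_var (ops o)
| .proj v l => by simp only [substC]; rw [substV_var v]
end

theorem substV_vars (ξ : ℕ → ℕ) (v : Val) : substV (fun n => Val.var (ξ n)) v = renameV ξ v := by
  have := substV_renameV v Val.var ξ
  rw [substV_var] at this
  exact this.symm

/-! ### cons substitutions and beta-computation lemmas -/

def consSub (v : Val) (σ : ℕ → Val) : ℕ → Val
| 0 => v
| n+1 => σ n

theorem sub1_liftS (v : Val) (σ : ℕ → Val) :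
    ∀ n, scomp (sub1 v) (liftS σ) n = consSub v σ n := by
  intro n
  cases n with
  | zero => rfl
  | succ n =>
    show substV (sub1 v) (renameV Nat.succ (σ n)) = σ n
    rw [substV_renameV]
    exact (substV_ext _ _ _ (fun m => rfl)).trans (substV_var _)

theorem subst1C_substC (σ : ℕ → Val) (c : Comp) (v : Val) :
    subst1C (substC (liftS σ) c) v = substC (consSub v σ) c := by
  unfold subst1C
  rw [substC_substC]
  exact substC_ext c _ _ (sub1_liftS v σ)

theorem subst1V_substV (σ : ℕ → Val) (w : Val) (v : Val) :
    subst1V (substV (liftS σ) w) v = substV (consSub v σ) w := by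
  unfold subst1V
  rw [substV_substV]
  exact substV_ext w _ _ (sub1_liftS v σ)

theorem sub1_rename (v w : Val) : substV (sub1 v) (renameV Nat.succ w) = w := by
  rw [substV_renameV]
  exact (substV_ext _ _ _ (fun m => rfl)).trans (substV_var _)

theorem sub2_liftS2 (x k : Val) (γ : ℕ → Val) :
    ∀ n, scomp (sub2 x k) (liftS (liftS γ)) n = consSub k (consSub x γ) n := by
  intro n
  match n with
  | 0 => rfl
  | 1 => rfl
  | n+2 =>
    show substV (sub2 x k) (renameV Nat.succ (liftS γ (n+1))) = γ n
    show substV (sub2 x k) (renameV Nat.succ (renameV Nat.succ (γ n))) = γ n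
    rw [renameV_renameV, substV_renameV]
    exact (substV_ext _ _ _ (fun m => rfl)).trans (substV_var _)

/-! ### numerals, call, step utilities -/

def numV : ℕ → Val
| 0 => .lam (.ret .unit)
| n+1 => .lam (.op 0 (numV n))

theorem renameV_numV (ξ : ℕ → ℕ) : ∀ n, renameV ξ (numV n) = numV n
| 0 => rfl
| n+1 => by
    show Val.lam (.op 0 (renameV (liftR ξ) (numV n))) = _
    rw [renameV_numV _ n]; rfl

theorem substV_numV (σ : ℕ → Val) : ∀ n, substV σ (numV n) = numV n
| 0 => rfl
| n+1 => by
    show Val.lam (.op 0 (substV (liftS σ) (numV n))) = _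
    rw [substV_numV _ n]; rfl

def callS (F A B : Val) : Comp :=
  .letin (.app F A) (.app (.var 0) (renameV Nat.succ B))

theorem stepStar_letin {c c' : Comp} (d : Comp) (h : StepStar c c') :
    StepStar (.letin c d) (.letin c' d) := by
  induction h with
  | refl => exact .refl
  | tail _ h2 ih => exact ih.tail (.letc h2)

theorem stepPlus_letin {c c' : Comp} (d : Comp) (h : StepPlus c c') :
    StepPlus (.letin c d) (.letin c' d) := by
  induction h with
  | single h => exact .single (.letc h)
  | tail _ h2 ih => exact ih.tail (.letc h2)

theorem stepStar_handle {r : Comp} {ops : ℕ → Comp} {c c' : Comp} (h : StepStar c c') :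
    StepStar (.handle r ops c) (.handle r ops c') := by
  induction h with
  | refl => exact .refl
  | tail _ h2 ih => exact ih.tail (.han h2)

/-! ### instruction computation lemmas -/

theorem substC_callF (σ : ℕ → Val) (fj a b : ℕ) :
    substC σ (callF fj a b) = .letin (.app (σ fj) (σ a)) (.app (.var 0) (renameV Nat.succ (σ b))) :=
  rfl

theorem step_inc0 {N : ℕ} (γ : ℕ → Val) (e : REnv N) (j : Fin N) (a : ℕ)
    (hx : γ e.x0 = numV a) :
    Step (substC γ (instrC (.inc 0 j) e)) (callS (γ (e.f j)) (numV (a+1)) (γ e.x1)) := by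
  have h1 : substC γ (instrC (.inc 0 j) e) =
      .letin (.ret (numV (a+1)))
        (substC (liftS γ) (callF (e.f j + 1) 0 (e.x1 + 1))) := by
    show Comp.letin (.ret (.lam (.op 0 (renameV Nat.succ (γ e.x0))))) _ = _
    rw [hx, renameV_numV]
    rfl
  have h2 : subst1C (substC (liftS γ) (callF (e.f j + 1) 0 (e.x1 + 1))) (numV (a+1)) =
      callS (γ (e.f j)) (numV (a+1)) (γ e.x1) := by
    rw [subst1C_substC]; rfl
  rw [h1, ← h2]
  exact Step.letret

theorem step_inc1 {N : ℕ} (γ : ℕ → Val) (e : REnv N) (j : Fin N) (b : ℕ)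
    (hx : γ e.x1 = numV b) :
    Step (substC γ (instrC (.inc 1 j) e)) (callS (γ (e.f j)) (γ e.x0) (numV (b+1))) := by
  have h1 : substC γ (instrC (.inc 1 j) e) =
      .letin (.ret (numV (b+1)))
        (substC (liftS γ) (callF (e.f j + 1) (e.x0 + 1) 0)) := by
    show Comp.letin (.ret (.lam (.op 0 (renameV Nat.succ (γ e.x1))))) _ = _
    rw [hx, renameV_numV]
    rfl
  have h2 : subst1C (substC (liftS γ) (callF (e.f j + 1) (e.x0 + 1) 0)) (numV (b+1)) =
      callS (γ (e.f j)) (γ e.x0) (numV (b+1)) := by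
    rw [subst1C_substC]
    rfl
  rw [h1, ← h2]
  exact Step.letret

theorem steps_dec0_zero {N : ℕ} (γ : ℕ → Val) (e : REnv N) (j m : Fin N)
    (hx : γ e.x0 = numV 0) :
    StepPlus (substC γ (instrC (.dec 0 j m) e)) (callS (γ (e.f j)) (γ e.x0) (γ e.x1)) := by
  have h1 : substC γ (instrC (.dec 0 j m) e) =
      .handle (substC (liftS γ) (callF (e.f j + 1) (e.x0 + 1) (e.x1 + 1)))
        (fun _ => substC (liftS (liftS γ)) (callF (e.f m + 2) 1 (e.x1 + 2)))
        (.app (γ e.x0) .unit) := rfl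
  have s1 : Step (.app (γ e.x0) Val.unit) (.ret .unit) := by
    rw [hx]; exact Step.lamapp
  have s2 :
      Step (Comp.handle (substC (liftS γ) (callF (e.f j + 1) (e.x0 + 1) (e.x1 + 1)))
        (fun _ => substC (liftS (liftS γ)) (callF (e.f m + 2) 1 (e.x1 + 2)))
        (.ret .unit)) (callS (γ (e.f j)) (γ e.x0) (γ e.x1)) := by
    have h2 : subst1C (substC (liftS γ) (callF (e.f j + 1) (e.x0 + 1) (e.x1 + 1))) .unit =
        callS (γ (e.f j)) (γ e.x0) (γ e.x1) := by rw [subst1C_substC]; rfl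
    rw [← h2]
    exact Step.hret
  rw [h1]
  exact Relation.TransGen.tail (Relation.TransGen.single (Step.han s1)) s2

theorem steps_dec0_succ {N : ℕ} (γ : ℕ → Val) (e : REnv N) (j m : Fin N) (b : ℕ)
    (hx : γ e.x0 = numV (b+1)) :
    StepPlus (substC γ (instrC (.dec 0 j m) e)) (callS (γ (e.f m)) (numV b) (γ e.x1)) := by
  have h1 : substC γ (instrC (.dec 0 j m) e) =
      .handle (substC (liftS γ) (callF (e.f j + 1) (e.x0 + 1) (e.x1 + 1)))
        (fun _ => substC (liftS (liftS γ)) (callF (e.f m + 2) 1 (e.x1 + 2)))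
        (.app (γ e.x0) .unit) := rfl
  have s1 : Step (.app (γ e.x0) Val.unit) (.op 0 (numV b)) := by
    rw [hx]
    have : subst1C (.op 0 (numV b)) .unit = .op 0 (numV b) := by
      show Comp.op 0 (substV (sub1 .unit) (numV b)) = _
      rw [substV_numV]
    exact this ▸ Step.lamapp
  set R := substC (liftS γ) (callF (e.f j + 1) (e.x0 + 1) (e.x1 + 1)) with hR
  set OPS := fun (_ : ℕ) => substC (liftS (liftS γ)) (callF (e.f m + 2) 1 (e.x1 + 2)) with hOPS
  have s2 : Step (Comp.handle R OPS (.op 0 (numV b))) (callS (γ (e.f m)) (numV b) (γ e.x1)) := by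
    have h2 : substC (sub2 (numV b) (contOf R OPS .hole)) (OPS 0) =
        callS (γ (e.f m)) (numV b) (γ e.x1) := by
      rw [hOPS]
      show substC (sub2 (numV b) (contOf R OPS .hole))
        (substC (liftS (liftS γ)) (callF (e.f m + 2) 1 (e.x1 + 2))) = _
      rw [substC_substC, substC_ext _ _ _ (sub2_liftS2 _ _ _)]
      rfl
    exact h2 ▸ Step.hop (E := .hole)
  rw [h1]
  exact Relation.TransGen.tail (Relation.TransGen.single (Step.han s1)) s2

theorem steps_dec1_zero {N : ℕ} (γ : ℕ → Val) (e : REnv N) (j m : Fin N)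
    (hx : γ e.x1 = numV 0) :
    StepPlus (substC γ (instrC (.dec 1 j m) e)) (callS (γ (e.f j)) (γ e.x0) (γ e.x1)) := by
  have h1 : substC γ (instrC (.dec 1 j m) e) =
      .handle (substC (liftS γ) (callF (e.f j + 1) (e.x0 + 1) (e.x1 + 1)))
        (fun _ => substC (liftS (liftS γ)) (callF (e.f m + 2) (e.x0 + 2) 1))
        (.app (γ e.x1) .unit) := rfl
  have s1 : Step (.app (γ e.x1) Val.unit) (.ret .unit) := by
    rw [hx]; exact Step.lamapp
  have s2 :
      Step (Comp.handle (substC (liftS γ) (callF (e.f j + 1) (e.x0 + 1) (e.x1 + 1)))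
        (fun _ => substC (liftS (liftS γ)) (callF (e.f m + 2) (e.x0 + 2) 1))
        (.ret .unit)) (callS (γ (e.f j)) (γ e.x0) (γ e.x1)) := by
    have h2 : subst1C (substC (liftS γ) (callF (e.f j + 1) (e.x0 + 1) (e.x1 + 1))) .unit =
        callS (γ (e.f j)) (γ e.x0) (γ e.x1) := by rw [subst1C_substC]; rfl
    rw [← h2]
    exact Step.hret
  rw [h1]
  exact Relation.TransGen.tail (Relation.TransGen.single (Step.han s1)) s2

theorem steps_dec1_succ {N : ℕ} (γ : ℕ → Val) (e : REnv N) (j m : Fin N) (b : ℕ)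
    (hx : γ e.x1 = numV (b+1)) :
    StepPlus (substC γ (instrC (.dec 1 j m) e)) (callS (γ (e.f m)) (γ e.x0) (numV b)) := by
  have h1 : substC γ (instrC (.dec 1 j m) e) =
      .handle (substC (liftS γ) (callF (e.f j + 1) (e.x0 + 1) (e.x1 + 1)))
        (fun _ => substC (liftS (liftS γ)) (callF (e.f m + 2) (e.x0 + 2) 1))
        (.app (γ e.x1) .unit) := rfl
  have s1 : Step (.app (γ e.x1) Val.unit) (.op 0 (numV b)) := by
    rw [hx]
    have : subst1C (.op 0 (numV b)) .unit = .op 0 (numV b) := by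
      show Comp.op 0 (substV (sub1 .unit) (numV b)) = _
      rw [substV_numV]
    exact this ▸ Step.lamapp
  set R := substC (liftS γ) (callF (e.f j + 1) (e.x0 + 1) (e.x1 + 1)) with hR
  set OPS := fun (_ : ℕ) => substC (liftS (liftS γ)) (callF (e.f m + 2) (e.x0 + 2) 1) with hOPS
  have s2 : Step (Comp.handle R OPS (.op 0 (numV b))) (callS (γ (e.f m)) (γ e.x0) (numV b)) := by
    have h2 : substC (sub2 (numV b) (contOf R OPS .hole)) (OPS 0) =
        callS (γ (e.f m)) (γ e.x0) (numV b) := by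
      rw [hOPS]
      show substC (sub2 (numV b) (contOf R OPS .hole))
        (substC (liftS (liftS γ)) (callF (e.f m + 2) (e.x0 + 2) 1)) = _
      rw [substC_substC, substC_ext _ _ _ (sub2_liftS2 _ _ _)]
      rfl
    exact h2 ▸ Step.hop (E := .hole)
  rw [h1]
  exact Relation.TransGen.tail (Relation.TransGen.single (Step.han s1)) s2

theorem eq_halt {N : ℕ} (γ : ℕ → Val) (e : REnv N) :
    substC γ (instrC .halt e) = .ret .unit := rfl

/-! ### the runtime value invariant and the unfolding lemmas -/

def fuelNeed : ℕ → ℕ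
| 0 => 0
| n+1 => fuelNeed n + (n+1)

inductive RVal {N : ℕ} (M : Fin N → MInstr N) : Fin N → Val → Prop
| mk {j : Fin N} {fuel : ℕ} {full : List (Fin N)} {e : REnv N} {γ : ℕ → Val} :
    full.Nodup → j ∉ full → fuelNeed full.length + full.length ≤ fuel →
    (∀ j', j' ≠ j → j' ∉ full → RVal M j' (γ (e.f j'))) →
    RVal M j (substV γ (.fix (.lam (.ret (.lam (mrecDefs M fuel full full
      ⟨fun j' => (bumpF e j).f j' + 2, 1, 0⟩ (fun e' => instrC (M j) e')))))))

theorem mrec_steps {N : ℕ} (M : Fin N → MInstr N) :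
    ∀ (fuel : ℕ) (todo full : List (Fin N)) (e : REnv N) (γ : ℕ → Val) (k : REnv N → Comp),
    full.Nodup → todo.Nodup → (∀ j ∈ todo, j ∈ full) →
    fuelNeed full.length + todo.length ≤ fuel →
    (∀ j, j ∉ full → RVal M j (γ (e.f j))) →
    ∃ (e' : REnv N) (γ' : ℕ → Val),
      StepStar (substC γ (mrecDefs M fuel full todo e k)) (substC γ' (k e')) ∧
      (∀ j ∈ todo, RVal M j (γ' (e'.f j))) ∧
      (∀ j, j ∉ todo → γ' (e'.f j) = γ (e.f j)) ∧
      γ' e'.x0 = γ e.x0 ∧ γ' e'.x1 = γ e.x1 := by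
  intro fuel
  induction fuel with
  | zero =>
    intro todo full e γ k _ _ _ hfuel _
    have : todo = [] := by
      cases todo with
      | nil => rfl
      | cons a l => simp only [List.length_cons] at hfuel; omega
    subst this
    exact ⟨e, γ, .refl, by simp, fun _ _ => rfl, rfl, rfl⟩
  | succ fuel ih =>
    intro todo full e γ k hful hnd htd hfuel hout
    cases todo with
    | nil => exact ⟨e, γ, .refl, by simp, fun _ _ => rfl, rfl, rfl⟩
    | cons j td =>
      have hjfull : j ∈ full := htd j (by simp)
      set W := substV γ (.fix (.lam (.ret (.lam (mrecDefs M fuel (full.erase j) (full.erase j)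
        ⟨fun j' => (bumpF e j).f j' + 2, 1, 0⟩ (fun e' => instrC (M j) e')))))) with hWdef
      have hW : RVal M j W := by
        refine RVal.mk (hful.erase j) ?_ ?_ ?_
        · intro hc
          exact ((hful.mem_erase_iff).1 hc).1 rfl
        · have hlen : (full.erase j).length = full.length - 1 := by
            rw [List.length_erase_of_mem hjfull]
          have hpos : 0 < full.length := List.length_pos_of_mem hjfull
          have hfn : fuelNeed full.length = fuelNeed (full.length - 1) + full.length := by
            cases h : full.length with
            | zero => omega
            | succ n => simp [fuelNeed, h]
          rw [hlen]
          simp only [List.length_cons] at hfuel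
          omega
        · intro j' hne hnm
          refine hout j' (fun hc => hnm ?_)
          exact (hful.mem_erase_iff).2 ⟨hne, hc⟩
      have hstep : Step (substC γ (mrecDefs M (fuel+1) full (j :: td) e k))
          (substC (consSub W γ) (mrecDefs M fuel full td (bumpF e j) k)) := by
        have h2 : subst1C (substC (liftS γ) (mrecDefs M fuel full td (bumpF e j) k)) W =
            substC (consSub W γ) (mrecDefs M fuel full td (bumpF e j) k) :=
          subst1C_substC _ _ _
        exact h2 ▸ Step.letret
      have hout2 : ∀ j'', j'' ∉ full → RVal M j'' ((consSub W γ) ((bumpF e j).f j'')) := by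
        intro j'' hnm
        have hne : j'' ≠ j := fun hc => hnm (hc ▸ hjfull)
        show RVal M j'' ((consSub W γ) (if j'' = j then 0 else e.f j'' + 1))
        rw [if_neg hne]
        exact hout j'' hnm
      obtain ⟨e', γ', hstar, h1, h2, hx0, hx1⟩ :=
        ih td full (bumpF e j) (consSub W γ) k hful (List.Nodup.of_cons hnd)
          (fun x hx => htd x (by simp [hx])) (by simp at hfuel ⊢; omega) hout2
      refine ⟨e', γ', (Relation.ReflTransGen.head hstep hstar), ?_, ?_, ?_, ?_⟩
      · intro j'' hmem
        rcases List.mem_cons.1 hmem with h | h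
        · subst h
          have hj'' : j'' ∉ td := (List.nodup_cons.1 hnd).1
          rw [h2 j'' hj'']
          show RVal M j'' ((consSub W γ) (if j'' = j'' then 0 else e.f j'' + 1))
          rw [if_pos rfl]
          exact hW
        · exact h1 _ h
      · intro j'' hnm
        have hne : j'' ≠ j := fun hc => hnm (by simp [hc])
        have : j'' ∉ td := fun hc => hnm (by simp [hc])
        rw [h2 j'' this]
        show (consSub W γ) (if j'' = j then 0 else e.f j'' + 1) = γ (e.f j'')
        rw [if_neg hne]
        rfl
      · rw [hx0]; rfl
      · rw [hx1]; rfl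

theorem call_steps {N : ℕ} {M : Fin N → MInstr N} {q : Fin N} {V : Val}
    (h : RVal M q V) (va vb : Val) :
    ∃ (γ : ℕ → Val) (e : REnv N),
      StepPlus (callS V va vb) (substC γ (instrC (M q) e)) ∧
      (∀ j, RVal M j (γ (e.f j))) ∧ γ e.x0 = va ∧ γ e.x1 = vb := by
  obtain ⟨hful, hnm, hfuel, hγ⟩ := h
  rename_i fuel full e₀ γ₀
  set B := mrecDefs M fuel full full ⟨fun j' => (bumpF e₀ q).f j' + 2, 1, 0⟩
    (fun e' => instrC (M q) e') with hB
  set X := Val.lam (.ret (.lam B)) with hX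
  set V := substV γ₀ (.fix X) with hV
  have hVRV : RVal M q V := RVal.mk hful hnm hfuel hγ
  set W := substV (liftS γ₀) X with hWdef
  have hfixW : V = .fix W := rfl
  set D := Comp.app (.var 0) (renameV Nat.succ vb) with hD
  -- step 1 : fix unfolding
  have s1 : Step (callS V va vb) (.letin (.app (subst1V W (.fix W)) va) D) := by
    rw [hfixW]
    exact Step.letc Step.fixapp
  have e1 : subst1V W (.fix W) =
      .lam (.ret (.lam (substC (liftS (liftS (consSub V γ₀))) B))) := by
    rw [hWdef, subst1V_substV, ← hfixW]
    rfl
  -- step 2 : apply to va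
  have s2 : Step (Comp.app (.lam (.ret (.lam (substC (liftS (liftS (consSub V γ₀))) B)))) va)
      (.ret (.lam (substC (liftS (consSub va (consSub V γ₀))) B))) := by
    have h2 : subst1C (.ret (.lam (substC (liftS (liftS (consSub V γ₀))) B))) va =
        .ret (.lam (substC (liftS (consSub va (consSub V γ₀))) B)) := by
      show Comp.ret (.lam (substC (liftS (sub1 va)) (substC (liftS (liftS (consSub V γ₀))) B))) = _
      rw [substC_substC, substC_ext B (scomp (liftS (sub1 va)) (liftS (liftS (consSub V γ₀))))
        (liftS (consSub va (consSub V γ₀)))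
        (fun n => (liftS_scomp (sub1 va) (liftS (consSub V γ₀)) n).trans
          (liftS_ext (sub1_liftS va (consSub V γ₀)) n))]
    exact h2 ▸ Step.lamapp
  -- step 3 : letret
  have s3 : Step (Comp.letin (.ret (.lam (substC (liftS (consSub va (consSub V γ₀))) B))) D)
      (.app (.lam (substC (liftS (consSub va (consSub V γ₀))) B)) vb) := by
    have h3 : subst1C D (.lam (substC (liftS (consSub va (consSub V γ₀))) B)) =
        .app (.lam (substC (liftS (consSub va (consSub V γ₀))) B)) vb := by
      show Comp.app _ (substV (sub1 _) (renameV Nat.succ vb)) = _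
      rw [sub1_rename]
      rfl
    exact h3 ▸ Step.letret
  -- step 4 : apply to vb
  have s4 : Step (Comp.app (.lam (substC (liftS (consSub va (consSub V γ₀))) B)) vb)
      (substC (consSub vb (consSub va (consSub V γ₀))) B) := by
    have h4 : subst1C (substC (liftS (consSub va (consSub V γ₀))) B) vb =
        substC (consSub vb (consSub va (consSub V γ₀))) B := subst1C_substC _ _ _
    exact h4 ▸ Step.lamapp
  -- the defs unfold
  set σf := consSub vb (consSub va (consSub V γ₀)) with hσf
  have hout : ∀ j, j ∉ full →
      RVal M j (σf ((⟨fun j' => (bumpF e₀ q).f j' + 2, 1, 0⟩ : REnv N).f j)) := by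
    intro j hnmj
    show RVal M j (σf ((if j = q then 0 else e₀.f j + 1) + 2))
    by_cases hjq : j = q
    · rw [if_pos hjq, hjq]
      exact hVRV
    · rw [if_neg hjq]
      exact hγ j hjq hnmj
  obtain ⟨e', γ', hstar, h1, h2, hx0, hx1⟩ :=
    mrec_steps M fuel full full ⟨fun j' => (bumpF e₀ q).f j' + 2, 1, 0⟩ σf
      (fun e' => instrC (M q) e') hful hful (fun _ hx => hx) hfuel hout
  refine ⟨γ', e', ?_, ?_, ?_, ?_⟩
  · refine Relation.TransGen.trans_left ?_ hstar
    exact ((((Relation.TransGen.single s1).tail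
      ((congrArg (fun z => Comp.letin (.app z va) D) e1) ▸ Step.letc s2)).tail s3).tail s4)
  · intro j
    by_cases hj : j ∈ full
    · exact h1 j hj
    · rw [h2 j hj]
      exact hout j hj
  · rw [hx0]; rfl
  · rw [hx1]; rfl

/-! ### simulation of machine steps -/

theorem sim_step {N : ℕ} {M : Fin N → MInstr N} {cfg cfg' : MCfg N} {V : Val}
    (hV : RVal M cfg.1 V) (hstep : MStep M cfg cfg') :
    ∃ V', RVal M cfg'.1 V' ∧
      StepPlus (callS V (numV cfg.2.1) (numV cfg.2.2))
        (callS V' (numV cfg'.2.1) (numV cfg'.2.2)) := by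
  cases hstep with
  | @inc0 q j a b h =>
    obtain ⟨γ, e, hplus, hR, hx0, hx1⟩ := call_steps hV (numV a) (numV b)
    rw [h] at hplus
    have hs := step_inc0 γ e j a hx0
    rw [hx1] at hs
    exact ⟨γ (e.f j), hR j, hplus.tail hs⟩
  | @inc1 q j a b h =>
    obtain ⟨γ, e, hplus, hR, hx0, hx1⟩ := call_steps hV (numV a) (numV b)
    rw [h] at hplus
    have hs := step_inc1 γ e j b hx1
    rw [hx0] at hs
    exact ⟨γ (e.f j), hR j, hplus.tail hs⟩
  | @dec0z q j m b h =>
    obtain ⟨γ, e, hplus, hR, hx0, hx1⟩ := call_steps hV (numV 0) (numV b)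
    rw [h] at hplus
    have hs := steps_dec0_zero γ e j m hx0
    rw [hx0, hx1] at hs
    exact ⟨γ (e.f j), hR j, hplus.trans hs⟩
  | @dec0s q j m a b h =>
    obtain ⟨γ, e, hplus, hR, hx0, hx1⟩ := call_steps hV (numV (a+1)) (numV b)
    rw [h] at hplus
    have hs := steps_dec0_succ γ e j m a hx0
    rw [hx1] at hs
    exact ⟨γ (e.f m), hR m, hplus.trans hs⟩
  | @dec1z q j m a h =>
    obtain ⟨γ, e, hplus, hR, hx0, hx1⟩ := call_steps hV (numV a) (numV 0)
    rw [h] at hplus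
    have hs := steps_dec1_zero γ e j m hx1
    rw [hx0, hx1] at hs
    exact ⟨γ (e.f j), hR j, hplus.trans hs⟩
  | @dec1s q j m a b h =>
    obtain ⟨γ, e, hplus, hR, hx0, hx1⟩ := call_steps hV (numV a) (numV (b+1))
    rw [h] at hplus
    have hs := steps_dec1_succ γ e j m b hx1
    rw [hx0] at hs
    exact ⟨γ (e.f m), hR m, hplus.trans hs⟩

theorem sim_halt {N : ℕ} {M : Fin N → MInstr N} {q : Fin N} {V : Val} {a b : ℕ}
    (hV : RVal M q V) (h : M q = .halt) :
    StepPlus (callS V (numV a) (numV b)) (.ret .unit) := by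
  obtain ⟨γ, e, hplus, hR, hx0, hx1⟩ := call_steps hV (numV a) (numV b)
  rw [h] at hplus
  exact (eq_halt γ e) ▸ hplus

theorem sim_run {N : ℕ} {M : Fin N → MInstr N} {cfg cfg' : MCfg N}
    (hrun : Relation.ReflTransGen (MStep M) cfg cfg') :
    ∀ V, RVal M cfg.1 V →
    ∃ V', RVal M cfg'.1 V' ∧
      StepStar (callS V (numV cfg.2.1) (numV cfg.2.2))
        (callS V' (numV cfg'.2.1) (numV cfg'.2.2)) := by
  induction hrun with
  | refl => exact fun V hV => ⟨V, hV, .refl⟩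
  | tail _ hstep ih =>
    intro V hV
    obtain ⟨V'', hV'', hstar⟩ := ih V hV
    obtain ⟨V', hV', hplus⟩ := sim_step hV'' hstep
    exact ⟨V', hV', hstar.trans hplus.to_reflTransGen⟩

/-- the program reaches the initial call configuration -/
theorem encode_start {N : ℕ} (M : Fin (N+1) → MInstr (N+1)) :
    ∃ V₀, RVal M 0 V₀ ∧
      StepStar (encodeMM M) (.letin (callS V₀ (numV 0) (numV 0)) (.ret .tt)) := by
  have hfuel : fuelNeed (List.finRange (N+1)).length + (List.finRange (N+1)).length ≤
      (N + 2) * (N + 2) := by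
    have hlen : (List.finRange (N+1)).length = N + 1 := List.length_finRange
    have hsq : ∀ n, fuelNeed n ≤ n * n := by
      intro n
      induction n with
      | zero => simp [fuelNeed]
      | succ n ih => simp [fuelNeed]; nlinarith
    rw [hlen]
    have := hsq (N+1)
    nlinarith
  obtain ⟨e', γ', hstar, h1, _, _, _⟩ :=
    mrec_steps M ((N+2)*(N+2)) (List.finRange (N+1)) (List.finRange (N+1))
      ⟨fun _ => 0, 0, 0⟩ Val.var
      (fun e =>
        .letin (.letin (.app (.var (e.f 0)) (.lam (.ret .unit)))
            (.app (.var 0) (.lam (.ret .unit))))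
          (.ret .tt))
      (List.nodup_finRange (N+1)) (List.nodup_finRange (N+1))
      (fun j _ => List.mem_finRange j) hfuel
      (fun j hj => absurd (List.mem_finRange j) hj)
  refine ⟨γ' (e'.f 0), h1 0 (List.mem_finRange 0), ?_⟩
  have heq : encodeMM M = substC Val.var (mrecDefs M ((N+2)*(N+2)) (List.finRange (N+1))
      (List.finRange (N+1)) ⟨fun _ => 0, 0, 0⟩
      (fun e =>
        .letin (.letin (.app (.var (e.f 0)) (.lam (.ret .unit)))
            (.app (.var 0) (.lam (.ret .unit))))
          (.ret .tt))) := (substC_var _).symm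
  rw [heq]
  exact hstar

theorem forward {N : ℕ} {M : Fin (N+1) → MInstr (N+1)} (h : MHalts M) :
    StepStar (encodeMM M) (.ret .tt) := by
  obtain ⟨q, a, b, hrun, hhalt⟩ := h
  obtain ⟨V₀, hV₀, hstar0⟩ := encode_start M
  obtain ⟨V, hV, hstar1⟩ := sim_run hrun V₀ hV₀
  have hstar2 : StepStar (callS V₀ (numV 0) (numV 0)) (.ret .unit) :=
    hstar1.trans (sim_halt hV hhalt).to_reflTransGen
  refine (hstar0.trans (stepStar_letin _ hstar2)).tail ?_
  exact Step.letret

/-! ### determinism of the small-step semantics -/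

theorem plug_op_ne_ret (E : EC) (o : ℕ) (v w : Val) : plug E (.op o v) ≠ .ret w := by
  cases E <;> simp [plug]

theorem step_not_plug_op : ∀ {c d}, Step c d → ∀ (E : EC) (o : ℕ) (v : Val),
    c = plug E (.op o v) → False := by
  intro c d h
  induction h with
  | letc h ih =>
    intro E o v hE
    cases E with
    | hole => simp [plug] at hE
    | letE E' c₂ =>
      simp [plug] at hE
      exact ih E' o v hE.1
  | letret =>
    intro E o v hE
    cases E with
    | hole => simp [plug] at hE
    | letE E' c₂ =>
      simp [plug] at hE
      exact plug_op_ne_ret E' o v _ hE.1.symm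
  | lamapp => intro E o v hE; cases E <;> simp [plug] at hE
  | fixapp => intro E o v hE; cases E <;> simp [plug] at hE
  | iftrue => intro E o v hE; cases E <;> simp [plug] at hE
  | iffalse => intro E o v hE; cases E <;> simp [plug] at hE
  | han _ _ => intro E o v hE; cases E <;> simp [plug] at hE
  | hret => intro E o v hE; cases E <;> simp [plug] at hE
  | hop => intro E o v hE; cases E <;> simp [plug] at hE
  | projr => intro E o v hE; cases E <;> simp [plug] at hE

theorem plug_op_inj : ∀ (E E' : EC) (o o' : ℕ) (v v' : Val),
    plug E (.op o v) = plug E' (.op o' v') → E = E' ∧ o = o' ∧ v = v' := by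
  intro E
  induction E with
  | hole =>
    intro E' o o' v v' h
    cases E' with
    | hole => simp [plug] at h; exact ⟨rfl, h.1, h.2⟩
    | letE E'' c => simp [plug] at h
  | letE E c ih =>
    intro E' o o' v v' h
    cases E' with
    | hole => simp [plug] at h
    | letE E'' c' =>
      simp [plug] at h
      obtain ⟨h1, h2⟩ := h
      obtain ⟨hE, ho, hv⟩ := ih E'' o o' v v' h1
      exact ⟨by rw [hE, h2], ho, hv⟩

theorem ret_no_step {v : Val} {d : Comp} : ¬ Step (.ret v) d := fun h => nomatch h

theorem step_handle_inv {r : Comp} {ops : ℕ → Comp} {c d : Comp}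
    (h : Step (.handle r ops c) d) :
    (∃ c', Step c c' ∧ d = .handle r ops c') ∨
    (∃ v, c = .ret v ∧ d = subst1C r v) ∨
    (∃ E o v, c = plug E (.op o v) ∧
      d = substC (sub2 v (contOf r ops E)) (ops o)) := by
  cases h with
  | han h' => exact Or.inl ⟨_, h', rfl⟩
  | hret => exact Or.inr (Or.inl ⟨_, rfl, rfl⟩)
  | hop => exact Or.inr (Or.inr ⟨_, _, _, rfl, rfl⟩)

theorem step_det : ∀ {c d d' : Comp}, Step c d → Step c d' → d = d' := by
  intro c d d' h
  induction h generalizing d' with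
  | letc h ih =>
    intro h2
    cases h2 with
    | letc h2' => rw [ih h2']
    | letret => exact absurd h ret_no_step
  | letret =>
    intro h2
    cases h2 with
    | letc h2' => exact absurd h2' ret_no_step
    | letret => rfl
  | lamapp => intro h2; cases h2; rfl
  | fixapp => intro h2; cases h2; rfl
  | iftrue => intro h2; cases h2; rfl
  | iffalse => intro h2; cases h2; rfl
  | han h ih =>
    intro h2
    rcases step_handle_inv h2 with ⟨c', hs, hd⟩ | ⟨v, hc, hd⟩ | ⟨E, o, v, hc, hd⟩
    · rw [hd, ih hs]
    · subst hc; exact absurd h ret_no_step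
    · exact absurd (step_not_plug_op h E o v hc) id
  | hret =>
    intro h2
    rcases step_handle_inv h2 with ⟨c', hs, hd⟩ | ⟨v, hc, hd⟩ | ⟨E, o, v, hc, hd⟩
    · exact absurd hs ret_no_step
    · cases hc; exact hd.symm
    · exact absurd hc.symm (plug_op_ne_ret E o v _)
  | hop =>
    intro h2
    rcases step_handle_inv h2 with ⟨c', hs, hd⟩ | ⟨v, hc, hd⟩ | ⟨E, o, v, hc, hd⟩
    · exact absurd (step_not_plug_op hs _ _ _ rfl) id
    · exact absurd hc (plug_op_ne_ret _ _ _ _)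
    · obtain ⟨hE, ho, hv⟩ := plug_op_inj _ _ _ _ _ _ hc
      subst hE; subst ho; subst hv; exact hd.symm
  | projr => intro h2; cases h2; rfl

/-! ### step counting -/

inductive StepN : ℕ → Comp → Comp → Prop
| refl (c) : StepN 0 c c
| head {c c' d : Comp} {n : ℕ} : Step c c' → StepN n c' d → StepN (n+1) c d

theorem StepN.snoc : ∀ {n c d e}, StepN n c d → Step d e → StepN (n+1) c e := by
  intro n c d e h
  induction h with
  | refl => exact fun h2 => .head h2 (.refl _)
  | head h1 _ ih => exact fun h2 => .head h1 (ih h2)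

theorem stepStar_stepN {c d : Comp} (h : StepStar c d) : ∃ n, StepN n c d := by
  induction h with
  | refl => exact ⟨0, .refl _⟩
  | tail _ h2 ih => obtain ⟨n, hn⟩ := ih; exact ⟨n+1, hn.snoc h2⟩

theorem stepPlus_stepN {c d : Comp} (h : StepPlus c d) : ∃ n, StepN (n+1) c d := by
  induction h with
  | single h => exact ⟨0, .head h (.refl _)⟩
  | tail _ h2 ih => obtain ⟨n, hn⟩ := ih; exact ⟨n+1, hn.snoc h2⟩

theorem StepN.trans {n : ℕ} : ∀ {m a b c}, StepN m a b → StepN n b c → StepN (m+n) a c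
| _, _, _, _, .refl _, h2 => by simpa using h2
| _, _, _, _, .head h1 hrest, h2 => by
    have h3 := StepN.head h1 (StepN.trans hrest h2)
    exact (Nat.add_right_comm _ 1 _) ▸ h3

theorem stepN_prefix : ∀ {k m a b c}, StepN k a b → StepN m a c → k ≤ m →
    StepN (m - k) b c := by
  intro k m a b c h
  induction h generalizing m c with
  | refl => intro h2 _; simpa using h2
  | @head a' c' b' n h1 hrest ih =>
    intro h2 hle
    cases h2 with
    | refl => omega
    | @head _ c'' _ m' h2' hrest2 =>
      cases step_det h1 h2'
      have h3 := ih hrest2 (by omega)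
      have harith : m' - n = m' + 1 - (n + 1) := by omega
      exact harith ▸ h3

/-! ### backward direction -/

theorem fin2_cases : ∀ i : Fin 2, i = 0 ∨ i = 1 := by decide

theorem mstep_total {N : ℕ} (M : Fin N → MInstr N) (q : Fin N) (a b : ℕ)
    (h : M q ≠ .halt) : ∃ cfg', MStep M (q, a, b) cfg' := by
  cases hq : M q with
  | halt => exact absurd hq h
  | inc i j =>
    rcases fin2_cases i with hi | hi <;> subst hi
    · exact ⟨_, MStep.inc0 hq⟩
    · exact ⟨_, MStep.inc1 hq⟩
  | dec i j m =>
    rcases fin2_cases i with hi | hi <;> subst hi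
    · cases a with
      | zero => exact ⟨_, MStep.dec0z hq⟩
      | succ a => exact ⟨_, MStep.dec0s hq⟩
    · cases b with
      | zero => exact ⟨_, MStep.dec1z hq⟩
      | succ b => exact ⟨_, MStep.dec1s hq⟩

theorem backward {N : ℕ} {M : Fin (N+1) → MInstr (N+1)}
    (h : StepStar (encodeMM M) (.ret .tt)) : MHalts M := by
  by_contra hM
  obtain ⟨K, hK⟩ := stepStar_stepN h
  have main : ∀ n, ∃ (q : Fin (N+1)) (a b : ℕ) (V : Val) (m : ℕ),
      Relation.ReflTransGen (MStep M) (0, 0, 0) (q, a, b) ∧ RVal M q V ∧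
      StepN m (encodeMM M) (.letin (callS V (numV a) (numV b)) (.ret .tt)) ∧ n ≤ m := by
    intro n
    induction n with
    | zero =>
      obtain ⟨V₀, hV₀, hstar⟩ := encode_start M
      obtain ⟨m, hm⟩ := stepStar_stepN hstar
      exact ⟨0, 0, 0, V₀, m, .refl, hV₀, hm, Nat.zero_le m⟩
    | succ n ih =>
      obtain ⟨q, a, b, V, m, hrun, hV, hm, hle⟩ := ih
      have hnh : M q ≠ .halt := fun hc => hM ⟨q, a, b, hrun, hc⟩
      obtain ⟨cfg', hstep⟩ := mstep_total M q a b hnh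
      obtain ⟨V', hV', hplus⟩ := sim_step (cfg := (q, a, b)) hV hstep
      obtain ⟨k, hk⟩ := stepPlus_stepN (stepPlus_letin (.ret .tt) hplus)
      exact ⟨cfg'.1, cfg'.2.1, cfg'.2.2, V', m + (k + 1), hrun.tail hstep, hV',
        hm.trans hk, by omega⟩
  obtain ⟨q, a, b, V, m, _, _, hm, hle⟩ := main (K + 1)
  have hpre := stepN_prefix hK hm (by omega)
  cases hmk : m - K with
  | zero => omega
  | succ _ =>
    rw [hmk] at hpre
    cases hpre with
    | head hs _ => exact ret_no_step hs

/-! ### typing -/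

def Rty : STy := .arrow .unit .unit
def Fty : STy := .arrow Rty (.arrow Rty .unit)
abbrev Ity : ℕ → STy := fun _ => STy.unit

theorem SC_callF {Γ : List STy} {fj a b : ℕ}
    (hf : Γ[fj]? = some Fty) (ha : Γ[a]? = some Rty) (hb : Γ[b]? = some Rty) :
    SC Ity SSmm Γ (callF fj a b) .unit :=
  SC.letin (SC.app (SV.var hf) (SV.var ha))
    (SC.app (SV.var (σ := .arrow Rty .unit) rfl)
      (SV.var (show (STy.arrow Rty .unit :: Γ)[b + 1]? = some Rty from hb)))

theorem SC_instr {N : ℕ} (ins : MInstr N) (e : REnv N) (Γ : List STy)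
    (hf : ∀ j, Γ[e.f j]? = some Fty)
    (hx0 : Γ[e.x0]? = some Rty) (hx1 : Γ[e.x1]? = some Rty) :
    SC Ity SSmm Γ (instrC ins e) .unit := by
  cases ins with
  | halt => exact SC.ret SV.unit
  | inc i j =>
    rcases fin2_cases i with hi | hi <;> subst hi
    · show SC Ity SSmm Γ
        (.letin (.ret (.lam (.op 0 (.var (e.x0 + 1))))) (callF (e.f j + 1) 0 (e.x1 + 1))) .unit
      exact SC.letin (SC.ret (SV.lam (SC.op (SV.var hx0))))
        (SC_callF (hf j) rfl hx1)
    · show SC Ity SSmm Γ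
        (.letin (.ret (.lam (.op 0 (.var (e.x1 + 1))))) (callF (e.f j + 1) (e.x0 + 1) 0)) .unit
      exact SC.letin (SC.ret (SV.lam (SC.op (SV.var hx1))))
        (SC_callF (hf j) hx0 rfl)
  | dec i j m =>
    rcases fin2_cases i with hi | hi <;> subst hi
    · show SC Ity SSmm Γ
        (.handle (callF (e.f j + 1) (e.x0 + 1) (e.x1 + 1))
          (fun _ => callF (e.f m + 2) 1 (e.x1 + 2))
          (.app (.var e.x0) .unit)) .unit
      exact SC.handle (σ := .unit)
        (SC_callF (hf j) hx0 hx1)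
        (fun o => SC_callF (hf m) rfl hx1)
        (SC.app (SV.var hx0) SV.unit)
    · show SC Ity SSmm Γ
        (.handle (callF (e.f j + 1) (e.x0 + 1) (e.x1 + 1))
          (fun _ => callF (e.f m + 2) (e.x0 + 2) 1)
          (.app (.var e.x1) .unit)) .unit
      exact SC.handle (σ := .unit)
        (SC_callF (hf j) hx0 hx1)
        (fun o => SC_callF (hf m) hx0 rfl)
        (SC.app (SV.var hx1) SV.unit)

theorem SC_mrec {N' : ℕ} (M : Fin N' → MInstr N') :
    ∀ (fuel : ℕ) (σ : STy) (todo full : List (Fin N')) (e : REnv N') (Γ : List STy)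
      (k : REnv N' → Comp) (P : REnv N' → List STy → Prop),
    full.Nodup → (∀ j ∈ todo, j ∈ full) →
    fuelNeed full.length + todo.length ≤ fuel →
    (∀ e' Γ' σ' j, P e' Γ' → P (bumpF e' j) (σ' :: Γ')) →
    P e Γ →
    (∀ j, j ∉ todo → Γ[e.f j]? = some Fty) →
    (∀ e' Γ', (∀ j, Γ'[e'.f j]? = some Fty) → P e' Γ' → SC Ity SSmm Γ' (k e') σ) →
    SC Ity SSmm Γ (mrecDefs M fuel full todo e k) σ := by
  intro fuel
  induction fuel with
  | zero =>
    intro σ todo full e Γ k P _ _ hfuel _ hfP hf hk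
    have : todo = [] := by
      cases todo with
      | nil => rfl
      | cons a l => simp only [List.length_cons] at hfuel; omega
    subst this
    exact hk e Γ (fun j => hf j (by simp)) hfP
  | succ fuel ih =>
    intro σ todo full e Γ k P hful htd hfuel hP hfP hf hk
    cases todo with
    | nil => exact hk e Γ (fun j => hf j (by simp)) hfP
    | cons j td =>
      have hjfull : j ∈ full := htd j (by simp)
      have hlen : (full.erase j).length = full.length - 1 := List.length_erase_of_mem hjfull
      have hpos : 0 < full.length := List.length_pos_of_mem hjfull
      have hfn : fuelNeed full.length = fuelNeed (full.length - 1) + full.length := by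
        cases h : full.length with
        | zero => omega
        | succ n => simp [fuelNeed, h]
      simp only [List.length_cons] at hfuel
      refine SC.letin (σ := Fty) (SC.ret (SV.fix (SV.lam (SC.ret (SV.lam ?_))))) ?_
      · -- the body of f_j
        refine ih .unit (full.erase j) (full.erase j)
          ⟨fun j' => (bumpF e j).f j' + 2, 1, 0⟩ (Rty :: Rty :: Fty :: Γ)
          (fun e' => instrC (M j) e')
          (fun e' Γ' => Γ'[e'.x0]? = some Rty ∧ Γ'[e'.x1]? = some Rty)
          (hful.erase j) (fun _ hx => hx) (by rw [hlen]; omega)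
          (fun e' Γ' σ' j' hPx => ⟨hPx.1, hPx.2⟩) ⟨rfl, rfl⟩ ?_ ?_
        · intro j' hj'
          show (Rty :: Rty :: Fty :: Γ)[(if j' = j then 0 else e.f j' + 1) + 2]? = some Fty
          by_cases hjq : j' = j
          · rw [if_pos hjq]; rfl
          · rw [if_neg hjq]
            have hj'full : j' ∉ full := fun hc => hj' (hful.mem_erase_iff.2 ⟨hjq, hc⟩)
            have : j' ∉ (j :: td) := by
              intro hc
              rcases List.mem_cons.1 hc with h | h
              · exact hjq h
              · exact hj'full (htd j' (by simp [h]))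
            exact hf j' this
        · intro e' Γ' hf' hPx
          exact SC_instr (M j) e' Γ' hf' hPx.1 hPx.2
      · -- the continuation
        refine ih σ td full (bumpF e j) (Fty :: Γ) k P hful
          (fun x hx => htd x (by simp [hx])) (by omega) hP (hP e Γ Fty j hfP) ?_ hk
        intro j'' hj''
        show (Fty :: Γ)[if j'' = j then 0 else e.f j'' + 1]? = some Fty
        by_cases hjq : j'' = j
        · rw [if_pos hjq]; rfl
        · rw [if_neg hjq]
          refine hf j'' (fun hc => ?_)
          rcases List.mem_cons.1 hc with h | h
          · exact hjq h
          · exact hj'' h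

theorem fuel_ok (N : ℕ) :
    fuelNeed (List.finRange (N+1)).length + (List.finRange (N+1)).length ≤
      (N + 2) * (N + 2) := by
  have hlen : (List.finRange (N+1)).length = N + 1 := List.length_finRange
  have hsq : ∀ n, fuelNeed n ≤ n * n := by
    intro n
    induction n with
    | zero => simp [fuelNeed]
    | succ n ih => simp [fuelNeed]; nlinarith
  rw [hlen]
  have := hsq (N+1)
  nlinarith

theorem SC_encode {N : ℕ} (M : Fin (N+1) → MInstr (N+1)) :
    SC Ity SSmm [] (encodeMM M) .bool := by
  refine SC_mrec M ((N+2)*(N+2)) .bool (List.finRange (N+1)) (List.finRange (N+1))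
    ⟨fun _ => 0, 0, 0⟩ [] _ (fun _ _ => True)
    (List.nodup_finRange _) (fun j _ => List.mem_finRange j) (fuel_ok N)
    (fun _ _ _ _ _ => trivial) trivial
    (fun j hj => absurd (List.mem_finRange j) hj) ?_
  intro e' Γ' hf' _
  exact SC.letin
    (SC.letin (SC.app (SV.var (hf' 0)) (SV.lam (SC.ret SV.unit)))
      (SC.app (SV.var (σ := .arrow Rty .unit) rfl) (SV.lam (SC.ret SV.unit))))
    (SC.ret SV.tt)


/-- Reduction from the halting problem for 2-register Minsky machines to
    reachability for the class MM: each MM program is `⊢_ST`-typable, and the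
    machine halts from `(q₀,0,0)` iff the corresponding program evaluates to
    `return true`.  (Hence reachability for `⊢_ST`-typable finitary PCF with
    effect handlers is undecidable.) -/
theorem mm_reduction (N : ℕ) (M : Fin (N+1) → MInstr (N+1)) :
    SC (fun _ => STy.unit) SSmm [] (encodeMM M) STy.bool ∧
    (MHalts M ↔ StepStar (encodeMM M) (Comp.ret Val.tt)) :=
  ⟨SC_encode M, ⟨forward, backward⟩⟩

end LEH
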